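/- (Entropy inequality for semi-discrete entropy stable schemes.) Let m ≥ 1, let η : ℝ^m → ℝ be differentiable with gradient W := ∇η, let ψ : ℝ^m → ℝ, and let F̃ : ℝ^m × ℝ^m → ℝ^m satisfy ⟨W(b) − W(a), F̃(a,b)⟩ = ψ(b) − ψ(a) for all a,b. Let Δx > 0, let D : ℤ → (m×m real matrices) assign to each interface a positive semidefinite matrix D_{i+1/2}, and let U : ℝ → (ℤ → ℝ^m) be differentiable in t and satisfy U_i′(t) = −(F̂_{i+1/2}(t) − F̂_{i−1/2}(t))/Δx, where F̂_{i+1/2} = F̃(U_i, U_{i+1}) − ½ D_{i+1/2} (W(U_{i+1}) − W(U_i)). Define q̃(a,b) = ⟨(W(a)+W(b))/2, F̃(a,b)⟩ − (ψ(a)+ψ(b))/2 and q̂_{i+1/2} = q̃(U_i, U_{i+1}) − ½⟨(W(U_i)+W(U_{i+1}))/2, D_{i+1/2}(W(U_{i+1}) − W(U_i))⟩. Then for all i and t, writing w_{i+1/2} = W(U_{i+1}) − W(U_i), (d/dt) η(U_i) + (q̂_{i+1/2} − q̂_{i−1/2})/Δx = −(1/(4Δx))(⟨w_{i+1/2}, D_{i+1/2}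 w_{i+1/2}⟩ + ⟨w_{i−1/2}, D_{i−1/2} w_{i−1/2}⟩) ≤ 0; i.e., the scheme is entropy stable. -/

import Mathlib

open Matrix

/-- The continuous linear map `u ↦ w ⬝ᵥ u` on `ℝ^m`, used to express that a function
has gradient `w`. -/
noncomputable def dotCLM {m : ℕ} (w : Fin m → ℝ) : (Fin m → ℝ) →L[ℝ] ℝ :=
  LinearMap.toContinuousLinearMap
    { toFun := fun u => w ⬝ᵥ u
      map_add' := fun x y => by simp [dotProduct, mul_add, Finset.sum_add_distrib]
      map_smul' := fun c x => by
        simp [dotProduct, Finset.mul_sum, mul_comm, mul_left_comm] }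

/-- Entropy inequality for first-order semi-discrete entropy stable schemes: if `η` has
gradient `W`, `F̃` is an entropy conservative two-point flux, `D_{i+1/2}` are positive
semidefinite dissipation matrices, and `U` solves the scheme with fluxes
`F̂_{i+1/2} = F̃(U_i,U_{i+1}) − ½D_{i+1/2}(W(U_{i+1})−W(U_i))`, then with the numerical
entropy fluxes `q̂_{i+1/2} = q̃(U_i,U_{i+1}) − ½⟨{{W}}_{i+1/2}, D_{i+1/2}[W]_{i+1/2}⟩`,
`d/dt η(U_i) + (q̂_{i+1/2} − q̂_{i−1/2})/Δx
  = −(1/(4Δx))(⟨[W]_{i+1/2}, D_{i+1/2}[W]_{i+1/2}⟩ + ⟨[W]_{i−1/2}, D_{i−1/2}[W]_{i−1/2}⟩) ≤ 0`. -/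
theorem stmt18 (m : ℕ) (hm : 1 ≤ m)
    (η : (Fin m → ℝ) → ℝ) (W : (Fin m → ℝ) → Fin m → ℝ) (ψ : (Fin m → ℝ) → ℝ)
    (Ftil : (Fin m → ℝ) → (Fin m → ℝ) → Fin m → ℝ)
    (hgrad : ∀ x, HasFDerivAt η (dotCLM (W x)) x)
    (hEC : ∀ a b, (W b - W a) ⬝ᵥ Ftil a b = ψ b - ψ a)
    (Δx : ℝ) (hΔx : 0 < Δx)
    (D : ℤ → Matrix (Fin m) (Fin m) ℝ) (hD : ∀ i, (D i).PosSemidef)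
    (U : ℝ → ℤ → Fin m → ℝ)
    (hscheme : ∀ (i : ℤ) (t : ℝ),
      HasDerivAt (fun s => U s i)
        (-(Δx⁻¹ •
          ((Ftil (U t i) (U t (i + 1))
              - (2 : ℝ)⁻¹ • (D i *ᵥ (W (U t (i + 1)) - W (U t i))))
            - (Ftil (U t (i - 1)) (U t i)
              - (2 : ℝ)⁻¹ • (D (i - 1) *ᵥ (W (U t i) - W (U t (i - 1)))))))) t) :
    let qtil : (Fin m → ℝ) → (Fin m → ℝ) → ℝ := fun a b =>
      ((2 : ℝ)⁻¹ • (W a + W b)) ⬝ᵥ Ftil a b - (ψ a + ψ b) / 2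
    ∀ (i : ℤ) (t : ℝ),
      let wp : Fin m → ℝ := W (U t (i + 1)) - W (U t i)
      let wm : Fin m → ℝ := W (U t i) - W (U t (i - 1))
      let qhatp : ℝ := qtil (U t i) (U t (i + 1))
        - (2 : ℝ)⁻¹ * (((2 : ℝ)⁻¹ • (W (U t i) + W (U t (i + 1)))) ⬝ᵥ (D i *ᵥ wp))
      let qhatm : ℝ := qtil (U t (i - 1)) (U t i)
        - (2 : ℝ)⁻¹ * (((2 : ℝ)⁻¹ • (W (U t (i - 1)) + W (U t i))) ⬝ᵥ (D (i - 1) *ᵥ wm))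
      let Rdiss : ℝ := -(1 / (4 * Δx)) * (wp ⬝ᵥ (D i *ᵥ wp) + wm ⬝ᵥ (D (i - 1) *ᵥ wm))
      HasDerivAt (fun s => η (U s i)) (Rdiss - (qhatp - qhatm) / Δx) t ∧ Rdiss ≤ 0 := by
  intro qtil i t wp wm qhatp qhatm Rdiss
  have hposp : 0 ≤ wp ⬝ᵥ (D i *ᵥ wp) := by
    have := (hD i).dotProduct_mulVec_nonneg wp
    simpa using this
  have hposm : 0 ≤ wm ⬝ᵥ (D (i - 1) *ᵥ wm) := by
    have := (hD (i - 1)).dotProduct_mulVec_nonneg wm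
    simpa using this
  constructor
  · have h := (hgrad (U t i)).comp_hasDerivAt t (hscheme i t)
    convert h using 1
    · rfl
    · rfl
    · rfl
    have hab := hEC (U t i) (U t (i + 1))
    have hcd := hEC (U t (i - 1)) (U t i)
    simp only [sub_dotProduct] at hab hcd
    show _ = dotCLM (W (U t i)) _
    rw [show ∀ u, dotCLM (W (U t i)) u = W (U t i) ⬝ᵥ u from fun u => rfl]
    simp only [dotCLM, LinearMap.coe_toContinuousLinearMap', LinearMap.coe_mk,
      AddHom.coe_mk, qhatp, qhatm, Rdiss, wp, wm, qtil,
      Matrix.mulVec_sub, dotProduct_neg, dotProduct_smul,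
      dotProduct_sub, dotProduct_add, smul_dotProduct,
      sub_dotProduct, add_dotProduct, smul_eq_mul]
    have hab2 : (W (U t (i + 1)) ⬝ᵥ Ftil (U t i) (U t (i + 1))
        - W (U t i) ⬝ᵥ Ftil (U t i) (U t (i + 1))) * Δx ^ 2
        = (ψ (U t (i + 1)) - ψ (U t i)) * Δx ^ 2 := by rw [hab]
    have hcd2 : (W (U t i) ⬝ᵥ Ftil (U t (i - 1)) (U t i)
        - W (U t (i - 1)) ⬝ᵥ Ftil (U t (i - 1)) (U t i)) * Δx ^ 2
        = (ψ (U t i) - ψ (U t (i - 1))) * Δx ^ 2 := by rw [hcd]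
    field_simp
    linarith [hab2, hcd2]
  · simp only [Rdiss]
    have h1 : 0 ≤ 1 / (4 * Δx) * (wp ⬝ᵥ (D i *ᵥ wp) + wm ⬝ᵥ (D (i - 1) *ᵥ wm)) :=
      mul_nonneg (by positivity) (add_nonneg hposp hposm)
    linarith
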